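/- arXiv:2404.12481 — 4 statements merged into one kernel-verified Lean document; each statement's English description precedes it below -/
import Mathlib

section
/- Let Γ be symmetric positive definite and Σ symmetric positive semidefinite of rank h with smallest nonzero eigenvalue η_min⁺. Then the smallest nonzero eigenvalue of Γ^{−1/2} Σ Γ^{−1/2} is at least η_min⁺ · ‖Γ‖_op⁻¹. -/
open Matrix
open scoped Matrix.Norms.L2Operator

lemma quad_decomp {p : ℕ} (A : Matrix (Fin p) (Fin p) ℝ) (hA : A.IsHermitian) (w : Fin p → ℝ) :
    ∃ c : Fin p → ℝ,
      w ⬝ᵥ (A *ᵥ w) = ∑ j, hA.eigenvalues j * c j ^ 2 ∧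
      (A *ᵥ w) ⬝ᵥ (A *ᵥ w) = ∑ j, (hA.eigenvalues j) ^ 2 * c j ^ 2 ∧
      w ⬝ᵥ w = ∑ j, c j ^ 2 := by
  set U : Matrix (Fin p) (Fin p) ℝ := (hA.eigenvectorUnitary : Matrix (Fin p) (Fin p) ℝ) with hUdef
  have hU : U ∈ Matrix.unitaryGroup (Fin p) ℝ := SetLike.coe_mem _
  have hUU : star U * U = 1 := hU.1
  have hUU' : U * star U = 1 := hU.2
  have hstar : star U = Uᵀ := rfl
  have hspec : A = U * diagonal (hA.eigenvalues) * star U := by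
    simpa using hA.spectral_theorem
  set c : Fin p → ℝ := (star U) *ᵥ w with hc
  set D : Matrix (Fin p) (Fin p) ℝ := diagonal (hA.eigenvalues) with hD
  have key : ∀ a b : Fin p → ℝ, (star U *ᵥ a) ⬝ᵥ (star U *ᵥ b) = a ⬝ᵥ b := by
    intro a b
    rw [hstar, mulVec_transpose, dotProduct_mulVec, vecMul_vecMul,
      ← hstar, hUU', vecMul_one]
  have hAc : star U *ᵥ (A *ᵥ w) = D *ᵥ c := by
    rw [mulVec_mulVec, hspec, ← Matrix.mul_assoc, ← Matrix.mul_assoc, hUU, Matrix.one_mul,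
      ← mulVec_mulVec]
  have hdot1 : w ⬝ᵥ (A *ᵥ w) = c ⬝ᵥ (D *ᵥ c) := by
    rw [← key w (A *ᵥ w), hAc]
  have hdot2 : (A *ᵥ w) ⬝ᵥ (A *ᵥ w) = (D *ᵥ c) ⬝ᵥ (D *ᵥ c) := by
    rw [← key (A *ᵥ w) (A *ᵥ w), hAc]
  have hdot3 : w ⬝ᵥ w = c ⬝ᵥ c := (key w w).symm
  refine ⟨c, ?_, ?_, ?_⟩
  · rw [hdot1]; simp [hD, dotProduct, mulVec_diagonal]
    exact Finset.sum_congr rfl fun j _ => by ring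
  · rw [hdot2]; simp [hD, dotProduct, mulVec_diagonal]
    exact Finset.sum_congr rfl fun j _ => by ring
  · rw [hdot3]; simp [dotProduct]
    exact Finset.sum_congr rfl fun j _ => by ring

lemma eig_le_opNorm {p : ℕ} (A : Matrix (Fin p) (Fin p) ℝ) (hA : A.IsHermitian) (j : Fin p) :
    |hA.eigenvalues j| ≤ ‖A‖ := by
  have hv := hA.mulVec_eigenvectorBasis j
  have h1 := Matrix.l2_opNorm_mulVec A (hA.eigenvectorBasis j)
  have hn : ‖hA.eigenvectorBasis j‖ = 1 := hA.eigenvectorBasis.orthonormal.1 j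
  erw [hv] at h1
  have heq : (EuclideanSpace.equiv (Fin p) ℝ).symm
      (hA.eigenvalues j • (hA.eigenvectorBasis j).ofLp)
      = hA.eigenvalues j • hA.eigenvectorBasis j := rfl
  rw [heq, hn, mul_one, norm_smul, Real.norm_eq_abs, hn, mul_one] at h1
  exact h1

/-- For `Γ` posdef: `x ⬝ᵥ x ≤ ‖Γ‖ * (x ⬝ᵥ Γ⁻¹ x)`. -/
lemma inv_quad_lower {p : ℕ} (Γ : Matrix (Fin p) (Fin p) ℝ) (hΓ : Γ.PosDef)
    (x : Fin p → ℝ) : x ⬝ᵥ x ≤ ‖Γ‖ * (x ⬝ᵥ (Γ⁻¹ *ᵥ x)) := by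
  have hinv : Γ * Γ⁻¹ = 1 := mul_nonsing_inv Γ (isUnit_iff_ne_zero.mpr hΓ.det_pos.ne')
  have hx : Γ *ᵥ (Γ⁻¹ *ᵥ x) = x := by rw [mulVec_mulVec, hinv, one_mulVec]
  obtain ⟨c, h1, h2, -⟩ := quad_decomp Γ hΓ.1 (Γ⁻¹ *ᵥ x)
  have hxy : x ⬝ᵥ (Γ⁻¹ *ᵥ x) = (Γ⁻¹ *ᵥ x) ⬝ᵥ (Γ *ᵥ (Γ⁻¹ *ᵥ x)) := by
    rw [hx, dotProduct_comm]
  have hxx : x ⬝ᵥ x = (Γ *ᵥ (Γ⁻¹ *ᵥ x)) ⬝ᵥ (Γ *ᵥ (Γ⁻¹ *ᵥ x)) := by rw [hx]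
  rw [hxy, hxx, h1, h2, Finset.mul_sum]
  apply Finset.sum_le_sum
  intro j _
  have hpos : 0 ≤ hΓ.1.eigenvalues j := hΓ.posSemidef.eigenvalues_nonneg j
  have hle : hΓ.1.eigenvalues j ≤ ‖Γ‖ := (abs_le.mp (eig_le_opNorm Γ hΓ.1 j)).2
  nlinarith [sq_nonneg (c j), mul_nonneg (mul_nonneg hpos (sq_nonneg (c j))) (sub_nonneg.mpr hle)]

/-- if `Γ` is symmetric positive definite, `Σ` symmetric positive semidefinite
of rank `h` with smallest nonzero eigenvalue `ηmin⁺`, and `R = Γ^{-1/2}` (positive definite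
with `R * R = Γ⁻¹`), then every nonzero eigenvalue of `Γ^{-1/2} Σ Γ^{-1/2}` is at least
`ηmin⁺ * ‖Γ‖_op⁻¹`. -/
theorem stmt3 (p h : ℕ) (Γ Sg R : Matrix (Fin p) (Fin p) ℝ)
    (hΓ : Γ.PosDef) (hSg : Sg.PosSemidef) (hrank : Sg.rank = h)
    (hR : R.PosDef) (hRsq : R * R = Γ⁻¹)
    (ηmin : ℝ) (hηpos : 0 < ηmin)
    (hmin : IsLeast {e : ℝ | ∃ i, hSg.isHermitian.eigenvalues i = e ∧ e ≠ 0} ηmin)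
    (hM : (R * Sg * R).IsHermitian) :
    ∀ i, hM.eigenvalues i ≠ 0 → ηmin * ‖Γ‖⁻¹ ≤ hM.eigenvalues i := by
  intro i hne
  set lam : ℝ := hM.eigenvalues i with hlam
  set v : Fin p → ℝ := ⇑(hM.eigenvectorBasis i) with hv
  have hMv : (R * Sg * R) *ᵥ v = lam • v := hM.mulVec_eigenvectorBasis i
  have hvv : v ⬝ᵥ v = 1 := by
    have h2 : (inner ℝ (hM.eigenvectorBasis i) (hM.eigenvectorBasis i) : ℝ) = 1 := by
      have := orthonormal_iff_ite.mp hM.eigenvectorBasis.orthonormal i i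
      simpa using this
    rw [EuclideanSpace.inner_eq_star_dotProduct] at h2
    simpa using h2
  have hRsym : Rᵀ = R := hR.1
  have hRdot : ∀ a b : Fin p → ℝ, a ⬝ᵥ (R *ᵥ b) = (R *ᵥ a) ⬝ᵥ b := by
    intro a b
    rw [dotProduct_mulVec, ← mulVec_transpose, hRsym]
  set w : Fin p → ℝ := R *ᵥ v with hw
  have hMv' : R *ᵥ (Sg *ᵥ w) = lam • v := by
    rw [hw, mulVec_mulVec, mulVec_mulVec]
    exact hMv
  have hlam_eq : lam = w ⬝ᵥ (Sg *ᵥ w) := by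
    have h0 : v ⬝ᵥ ((R * Sg * R) *ᵥ v) = lam := by
      rw [hMv, dotProduct_smul, hvv, smul_eq_mul, mul_one]
    rw [← h0, show (R * Sg * R) *ᵥ v = R *ᵥ (Sg *ᵥ (R *ᵥ v)) by
      rw [mulVec_mulVec, mulVec_mulVec], hRdot, ← hw]
  have hlam_sq : (Sg *ᵥ w) ⬝ᵥ (Γ⁻¹ *ᵥ (Sg *ᵥ w)) = lam ^ 2 := by
    rw [← hRsq, show (R * R) *ᵥ (Sg *ᵥ w) = R *ᵥ (R *ᵥ (Sg *ᵥ w)) by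
      simp [mulVec_mulVec, Matrix.mul_assoc], hRdot, hMv', smul_dotProduct, dotProduct_smul, hvv]
    simp [smul_eq_mul]; ring
  have hlam_nonneg : 0 ≤ lam := by
    rw [hlam_eq]
    simpa using hSg.dotProduct_mulVec_nonneg w
  have hlam_pos : 0 < lam := lt_of_le_of_ne hlam_nonneg (Ne.symm hne)
  have hSgineq : ηmin * (w ⬝ᵥ (Sg *ᵥ w)) ≤ (Sg *ᵥ w) ⬝ᵥ (Sg *ᵥ w) := by
    obtain ⟨c, h1, h2, -⟩ := quad_decomp Sg hSg.1 w
    rw [h1, h2, Finset.mul_sum]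
    apply Finset.sum_le_sum
    intro j _
    rcases eq_or_ne (hSg.1.eigenvalues j) 0 with hz | hz
    · rw [hz]; simp
    · have hge : ηmin ≤ hSg.1.eigenvalues j := hmin.2 ⟨j, rfl, hz⟩
      nlinarith [mul_nonneg (mul_nonneg (hSg.eigenvalues_nonneg j) (sq_nonneg (c j)))
        (sub_nonneg.mpr hge)]
  have hΓne : Γ ≠ 0 := by
    intro h0
    have hne0 : (Pi.single i 1 : Fin p → ℝ) ≠ 0 := by
      intro hz; have := congrFun hz i; simp at this
    have := hΓ.dotProduct_mulVec_pos hne0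
    rw [h0] at this
    simp at this
  have hΓnorm : 0 < ‖Γ‖ := norm_pos_iff.mpr hΓne
  have hchain : ηmin * lam ≤ ‖Γ‖ * lam ^ 2 := by
    calc ηmin * lam = ηmin * (w ⬝ᵥ (Sg *ᵥ w)) := by rw [← hlam_eq]
      _ ≤ (Sg *ᵥ w) ⬝ᵥ (Sg *ᵥ w) := hSgineq
      _ ≤ ‖Γ‖ * ((Sg *ᵥ w) ⬝ᵥ (Γ⁻¹ *ᵥ (Sg *ᵥ w))) := inv_quad_lower Γ hΓ _
      _ = ‖Γ‖ * lam ^ 2 := by rw [hlam_sq]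
  have h2 : ηmin ≤ ‖Γ‖ * lam := by
    have h3 : ηmin * lam ≤ (‖Γ‖ * lam) * lam := by nlinarith
    exact le_of_mul_le_mul_right h3 hlam_pos
  have h4 : ηmin / ‖Γ‖ ≤ lam := (div_le_iff₀ hΓnorm).mpr (by linarith [h2])
  simpa [div_eq_mul_inv] using h4
end

section
/- Let φ_1 ≥ φ_2 ≥ … ≥ φ_{h₁} > 0 and n < h₁ positive integers. If for some h̃ ∈ {n,…,h₁−1} one has (1/h̃) Σ_{i≤h̃} φ_{h̃}/φ_i + n/h̃ − 1 ≥ 0, then (1/(h̃+1)) Σ_{i≤h̃+1} φ_{h̃+1}/φ_i + n/(h̃+1) − 1 ≤ (1/h̃) Σ_{i≤h̃} φ_{h̃}/φ_i + n/h̃ − 1. -/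
/-- Claim 1: for nonincreasing positive `φ_1 ≥ … ≥ φ_{h₁}` and
`n ≤ h̃ < h₁`, if `Υ(h̃) ≥ 0` then `Υ(h̃+1) ≤ Υ(h̃)`, where
`Υ(m) = (1/m) Σ_{i≤m} φ_m/φ_i + n/m − 1`. -/
theorem stmt11 (h₁ n : ℕ) (hn : 0 < n) (hnh : n < h₁)
    (φ : ℕ → ℝ) (hpos : ∀ i, 1 ≤ i → i ≤ h₁ → 0 < φ i)
    (hmono : ∀ i j, 1 ≤ i → i ≤ j → j ≤ h₁ → φ j ≤ φ i)
    (m : ℕ) (hm1 : n ≤ m) (hm2 : m < h₁)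
    (hyp : 0 ≤ (1 / (m : ℝ)) * ∑ i ∈ Finset.Icc 1 m, φ m / φ i + (n : ℝ) / m - 1) :
    (1 / ((m : ℝ) + 1)) * ∑ i ∈ Finset.Icc 1 (m + 1), φ (m + 1) / φ i
        + (n : ℝ) / (m + 1) - 1 ≤
      (1 / (m : ℝ)) * ∑ i ∈ Finset.Icc 1 m, φ m / φ i + (n : ℝ) / m - 1 := by
  have hm0 : 0 < m := lt_of_lt_of_le hn hm1
  have hmR : (0:ℝ) < m := by exact_mod_cast hm0
  have hmR1 : (0:ℝ) < (m:ℝ) + 1 := by linarith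
  set S := ∑ i ∈ Finset.Icc 1 m, φ m / φ i with hS
  -- sum bound
  have hsum : ∑ i ∈ Finset.Icc 1 (m+1), φ (m+1) / φ i ≤ S + 1 := by
    rw [Finset.sum_Icc_succ_top (by omega : 1 ≤ m+1)]
    have h1 : φ (m+1) / φ (m+1) = 1 :=
      div_self (ne_of_gt (hpos _ (by omega) (by omega)))
    rw [h1]
    have : ∑ i ∈ Finset.Icc 1 m, φ (m+1) / φ i ≤ S := by
      apply Finset.sum_le_sum
      intro i hi
      rw [Finset.mem_Icc] at hi
      have hφi : 0 < φ i := hpos i hi.1 (by omega)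
      have : φ (m+1) ≤ φ m := hmono m (m+1) (by omega) (by omega) (by omega)
      gcongr
    linarith
  -- from hyp : m ≤ S + n
  have key : (m:ℝ) ≤ S + n := by
    have h' : (0:ℝ) ≤ ((1/(m:ℝ)) * S + (n:ℝ)/m - 1) * m := mul_nonneg hyp hmR.le
    field_simp at h'
    linarith
  have step1 : (1 / ((m:ℝ) + 1)) * ∑ i ∈ Finset.Icc 1 (m + 1), φ (m + 1) / φ i
      + (n : ℝ) / (m + 1) - 1 ≤ (1 / ((m:ℝ) + 1)) * (S + 1) + (n : ℝ) / (m + 1) - 1 := by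
    have := mul_le_mul_of_nonneg_left hsum (by positivity : (0:ℝ) ≤ 1 / ((m:ℝ)+1))
    linarith
  refine step1.trans ?_
  have hdiv : (S + 1 + n) / ((m:ℝ) + 1) ≤ (S + n) / m := by
    rw [div_le_div_iff₀ hmR1 hmR]
    nlinarith
  have e1 : (1 / ((m:ℝ) + 1)) * (S + 1) + (n : ℝ) / (m + 1) = (S + 1 + n) / ((m:ℝ)+1) := by
    field_simp
  have e2 : (1 / (m:ℝ)) * S + (n : ℝ) / m = (S + n) / (m:ℝ) := by
    field_simp
  rw [e1, e2] at *
  linarith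
end

section
/- Let φ_1 ≥ … ≥ φ_h ≥ 0 with φ_i > 0 exactly for i ≤ h₁, and n < h₁ ≤ h positive integers. Let h₀ be the unique index in {n,…,h₁} from the phase-transition lemma. Define x_i = (1 − n/h₀) / ((1/h₀) Σ_{j≤h₀} φ_i/φ_j) for i ≤ h₀ and x_i = 1 for h₀ < i ≤ h. Then x ∈ [0,1]^h, Σ_i x_i = h − n, and x minimizes Σ_{i=1}^h φ_i x_i² over all vectors in [0,1]^h with coordinate sum h − n. -/
/-- soft-selection regime: with `φ_1 ≥ … ≥ φ_h ≥ 0` having exactly `h₁`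
positive entries, `n < h₁ ≤ h`, and `h₀ ∈ {n,…,h₁}` the phase-transition index
(characterized by `h̃ ≤ h₀ ⟺ (1/(h̃−n)) Σ_{i≤h̃} φ_{h̃}/φ_i ≥ 1` for `n < h̃ ≤ h₁`),
the vector `x` with `x_i = (1 − n/h₀)/((1/h₀) Σ_{j≤h₀} φ_i/φ_j)` for `i ≤ h₀` and
`x_i = 1` otherwise is feasible (`x ∈ [0,1]^h`, `Σ x_i = h − n`) and minimizes
`Σ φ_i x_i²` over the feasible set. -/
theorem stmt14 (h h₁ n : ℕ) (hn : 0 < n) (hnh : n < h₁) (hh : h₁ ≤ h)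
    (φ : ℕ → ℝ)
    (hmono : ∀ i j, 1 ≤ i → i ≤ j → j ≤ h → φ j ≤ φ i)
    (hsupp : ∀ i, 1 ≤ i → i ≤ h → (0 < φ i ↔ i ≤ h₁))
    (hnonneg : ∀ i, 1 ≤ i → i ≤ h → 0 ≤ φ i)
    (h₀ : ℕ) (hh₀1 : n ≤ h₀) (hh₀2 : h₀ ≤ h₁)
    (hchar : ∀ m, n < m → m ≤ h₁ →
      (m ≤ h₀ ↔ 1 ≤ (1 / ((m : ℝ) - n)) * ∑ i ∈ Finset.Icc 1 m, φ m / φ i))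
    (x : ℕ → ℝ)
    (hxdef : ∀ i, x i =
      if i ≤ h₀ then
        (1 - (n : ℝ) / h₀) / ((1 / (h₀ : ℝ)) * ∑ j ∈ Finset.Icc 1 h₀, φ i / φ j)
      else 1) :
    (∀ i ∈ Finset.Icc 1 h, x i ∈ Set.Icc (0 : ℝ) 1) ∧
      (∑ i ∈ Finset.Icc 1 h, x i = (h : ℝ) - n) ∧
      (∀ y : ℕ → ℝ, (∀ i ∈ Finset.Icc 1 h, y i ∈ Set.Icc (0 : ℝ) 1) →
        ∑ i ∈ Finset.Icc 1 h, y i = (h : ℝ) - n →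
        ∑ i ∈ Finset.Icc 1 h, φ i * x i ^ 2 ≤ ∑ i ∈ Finset.Icc 1 h, φ i * y i ^ 2) := by
  have φpos : ∀ i, 1 ≤ i → i ≤ h₁ → 0 < φ i := fun i h1 h2 =>
    (hsupp i h1 (h2.trans hh)).mpr h2
  -- n < h₀
  have hnh₀ : n < h₀ := by
    have h1 : n + 1 ≤ h₀ := by
      rw [hchar (n+1) (by omega) (by omega)]
      have hone : (((n:ℕ)+1 : ℕ) : ℝ) - n = 1 := by push_cast; ring
      rw [hone]
      have hmem : n + 1 ∈ Finset.Icc 1 (n+1) := Finset.mem_Icc.mpr ⟨by omega, le_refl _⟩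
      rw [one_div_one, one_mul]
      calc (1:ℝ) = φ (n+1) / φ (n+1) :=
            (div_self (ne_of_gt (φpos (n+1) (by omega) (by omega)))).symm
        _ ≤ _ := Finset.single_le_sum (f := fun i => φ (n+1) / φ i)
            (fun i hi => by
              obtain ⟨hi1, hi2⟩ := Finset.mem_Icc.mp hi
              exact div_nonneg (φpos (n+1) (by omega) (by omega)).le
                (φpos i hi1 (by omega)).le) hmem
    omega
  have hh₀h : h₀ ≤ h := hh₀2.trans hh
  have hh₀pos : 1 ≤ h₀ := by omega
  set S : ℝ := ∑ j ∈ Finset.Icc 1 h₀, 1 / φ j with hSdef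
  have Spos : 0 < S := by
    apply Finset.sum_pos
    · intro j hj
      obtain ⟨hj1, hj2⟩ := Finset.mem_Icc.mp hj
      exact one_div_pos.mpr (φpos j hj1 (hj2.trans hh₀2))
    · exact ⟨1, Finset.mem_Icc.mpr ⟨le_refl _, hh₀pos⟩⟩
  set c : ℝ := ((h₀:ℝ) - n) / S with hcdef
  have hd₀pos : (0:ℝ) < (h₀:ℝ) - n := by
    have : (n:ℝ) < h₀ := Nat.cast_lt.mpr hnh₀
    linarith
  have cpos : 0 < c := div_pos hd₀pos Spos
  have hsum_c : ∀ i, ∑ j ∈ Finset.Icc 1 h₀, φ i / φ j = φ i * S := by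
    intro i
    rw [hSdef, Finset.mul_sum]
    exact Finset.sum_congr rfl (fun j _ => by rw [mul_one_div])
  have xval : ∀ i, 1 ≤ i → i ≤ h₀ → x i = c / φ i := by
    intro i h1 h2
    rw [hxdef i, if_pos h2, hsum_c i, hcdef]
    have hφ : φ i ≠ 0 := ne_of_gt (φpos i h1 (h2.trans hh₀2))
    have hS : S ≠ 0 := ne_of_gt Spos
    have hh₀ne : (h₀:ℝ) ≠ 0 := Nat.cast_ne_zero.mpr (by omega)
    rw [div_eq_div_iff (by positivity) hφ]
    field_simp
  have hφx : ∀ i, 1 ≤ i → i ≤ h₀ → φ i * x i = c := by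
    intro i h1 h2
    rw [xval i h1 h2, mul_comm, div_mul_cancel₀ _ (ne_of_gt (φpos i h1 (h2.trans hh₀2)))]
  -- c ≤ φ h₀
  have hcφ : c ≤ φ h₀ := by
    have h1 := (hchar h₀ hnh₀ hh₀2).mp le_rfl
    rw [hsum_c h₀, one_div_mul_eq_div, le_div_iff₀ hd₀pos, one_mul] at h1
    rw [hcdef, div_le_iff₀ Spos]
    linarith
  -- φ i ≤ c for i > h₀
  have hφc : ∀ i, h₀ < i → i ≤ h → φ i ≤ c := by
    intro i hi1 hi2
    by_cases hc1 : i ≤ h₁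
    · have hlt : h₀ < h₁ := lt_of_lt_of_le hi1 hc1
      have hnot : ¬ (h₀ + 1 ≤ h₀) := by omega
      have h2 : ¬ (1 ≤ (1 / (((h₀+1:ℕ) : ℝ) - n)) *
          ∑ j ∈ Finset.Icc 1 (h₀+1), φ (h₀+1) / φ j) :=
        fun hcon => hnot ((hchar (h₀+1) (by omega) (by omega)).mpr hcon)
      push_neg at h2
      have hd1pos : (0:ℝ) < ((h₀+1:ℕ) : ℝ) - n := by push_cast; linarith
      rw [one_div_mul_eq_div, div_lt_one hd1pos] at h2
      rw [Finset.sum_Icc_succ_top (by omega : 1 ≤ h₀ + 1), hsum_c (h₀+1),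
        div_self (ne_of_gt (φpos (h₀+1) (by omega) (by omega)))] at h2
      have hφ1c : φ (h₀+1) < c := by
        rw [hcdef, lt_div_iff₀ Spos]
        push_cast at h2
        linarith
      exact le_of_lt (lt_of_le_of_lt (hmono (h₀+1) i (by omega) (by omega) hi2) hφ1c)
    · have hz : ¬ 0 < φ i := fun hp => hc1 ((hsupp i (by omega) hi2).mp hp)
      push_neg at hz
      linarith
  -- splitting sums
  have split : ∀ f : ℕ → ℝ, ∑ i ∈ Finset.Icc 1 h, f i
      = ∑ i ∈ Finset.Icc 1 h₀, f i + ∑ i ∈ Finset.Ioc h₀ h, f i := by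
    intro f
    rw [show Finset.Icc 1 h = Finset.Ioc 0 h by ext i; simp; omega,
      show Finset.Icc 1 h₀ = Finset.Ioc 0 h₀ by ext i; simp; omega]
    exact (Finset.sum_Ioc_consecutive f (Nat.zero_le _) hh₀h).symm
  have hS1 : ∑ i ∈ Finset.Icc 1 h₀, x i = (h₀:ℝ) - n := by
    have : ∑ i ∈ Finset.Icc 1 h₀, x i = ∑ i ∈ Finset.Icc 1 h₀, c * (1 / φ i) := by
      apply Finset.sum_congr rfl
      intro i hi
      obtain ⟨hi1, hi2⟩ := Finset.mem_Icc.mp hi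
      rw [xval i hi1 hi2, mul_one_div]
    rw [this, ← Finset.mul_sum, ← hSdef, hcdef, div_mul_cancel₀ _ (ne_of_gt Spos)]
  have hS2 : ∑ i ∈ Finset.Ioc h₀ h, x i = (h:ℝ) - h₀ := by
    have : ∑ i ∈ Finset.Ioc h₀ h, x i = ∑ i ∈ Finset.Ioc h₀ h, (1:ℝ) := by
      apply Finset.sum_congr rfl
      intro i hi
      obtain ⟨hi1, _⟩ := Finset.mem_Ioc.mp hi
      rw [hxdef i, if_neg (by omega)]
    rw [this, Finset.sum_const, Nat.card_Ioc, nsmul_eq_mul, mul_one, Nat.cast_sub hh₀h]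
  refine ⟨?_, ?_, ?_⟩
  · intro i hi
    obtain ⟨hi1, hi2⟩ := Finset.mem_Icc.mp hi
    by_cases hc : i ≤ h₀
    · have hφi : 0 < φ i := φpos i hi1 (hc.trans hh₀2)
      rw [xval i hi1 hc]
      constructor
      · exact div_nonneg cpos.le hφi.le
      · rw [div_le_one hφi]
        exact hcφ.trans (hmono i h₀ hi1 hc hh₀h)
    · rw [hxdef i, if_neg hc]
      exact ⟨zero_le_one, le_rfl⟩
  · rw [split x, hS1, hS2]; ring
  · intro y hy hysum
    have key : ∑ i ∈ Finset.Icc 1 h, φ i * y i ^ 2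
        = ∑ i ∈ Finset.Icc 1 h, φ i * x i ^ 2
          + (∑ i ∈ Finset.Icc 1 h, φ i * (y i - x i) ^ 2
            + 2 * ∑ i ∈ Finset.Icc 1 h, φ i * x i * (y i - x i)) := by
      rw [Finset.mul_sum, ← Finset.sum_add_distrib, ← Finset.sum_add_distrib]
      apply Finset.sum_congr rfl
      intro i _
      ring
    have nonneg1 : 0 ≤ ∑ i ∈ Finset.Icc 1 h, φ i * (y i - x i) ^ 2 := by
      apply Finset.sum_nonneg
      intro i hi
      obtain ⟨hi1, hi2⟩ := Finset.mem_Icc.mp hi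
      exact mul_nonneg (hnonneg i hi1 hi2) (sq_nonneg _)
    have nonneg2 : 0 ≤ ∑ i ∈ Finset.Icc 1 h, φ i * x i * (y i - x i) := by
      have hB : ∑ i ∈ Finset.Icc 1 h₀, y i + ∑ i ∈ Finset.Ioc h₀ h, y i = (h:ℝ) - n := by
        rw [← split y]; exact hysum
      have t1 : ∑ i ∈ Finset.Icc 1 h₀, φ i * x i * (y i - x i)
          = c * ((∑ i ∈ Finset.Icc 1 h₀, y i) - ((h₀:ℝ) - n)) := by
        rw [← hS1, ← Finset.sum_sub_distrib, Finset.mul_sum]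
        apply Finset.sum_congr rfl
        intro i hi
        obtain ⟨hi1, hi2⟩ := Finset.mem_Icc.mp hi
        rw [hφx i hi1 hi2]
      have t2 : ∑ i ∈ Finset.Ioc h₀ h, φ i * x i * (y i - x i)
          = ∑ i ∈ Finset.Ioc h₀ h, φ i * (y i - 1) := by
        apply Finset.sum_congr rfl
        intro i hi
        obtain ⟨hi1, _⟩ := Finset.mem_Ioc.mp hi
        rw [hxdef i, if_neg (by omega), mul_one]
      have t3 : ∑ i ∈ Finset.Ioc h₀ h, (1 - y i)
          = ((h:ℝ) - h₀) - ∑ i ∈ Finset.Ioc h₀ h, y i := by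
        rw [Finset.sum_sub_distrib, Finset.sum_const, Nat.card_Ioc, nsmul_eq_mul,
          mul_one, Nat.cast_sub hh₀h]
      have t4 : ∑ i ∈ Finset.Icc 1 h, φ i * x i * (y i - x i)
          = ∑ i ∈ Finset.Ioc h₀ h, (c - φ i) * (1 - y i) := by
        rw [split (fun i => φ i * x i * (y i - x i)), t1, t2]
        have expand : ∀ i ∈ Finset.Ioc h₀ h, (c - φ i) * (1 - y i)
            = c * (1 - y i) + φ i * (y i - 1) := by
          intro i _; ring
        rw [Finset.sum_congr rfl expand, Finset.sum_add_distrib, ← Finset.mul_sum, t3]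
        have : (∑ i ∈ Finset.Icc 1 h₀, y i) - ((h₀:ℝ) - n)
            = ((h:ℝ) - h₀) - ∑ i ∈ Finset.Ioc h₀ h, y i := by linarith
        rw [this]
      rw [t4]
      apply Finset.sum_nonneg
      intro i hi
      obtain ⟨hi1, hi2⟩ := Finset.mem_Ioc.mp hi
      have hyi := hy i (Finset.mem_Icc.mpr ⟨by omega, hi2⟩)
      exact mul_nonneg (by linarith [hφc i hi1 hi2]) (by linarith [hyi.2])
    rw [key]
    linarith
end

section
/- Let X ∈ ℝ^{n×p} and Γ ∈ ℝ^{p×p} symmetric positive definite. Then lim_{λ₀→0⁺} (XᵀX + λ₀Γ)⁻¹ Xᵀ y = Γ^{−1/2}(Γ^{−1/2}XᵀXΓ^{−1/2})⁺ Γ^{−1/2} Xᵀ y = Γ⁻¹Xᵀ(XΓ⁻¹Xᵀ)⁺ y for every y ∈ ℝⁿ, where (·)⁺ denotes the Moore–Penrose pseudoinverse. -/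
set_option maxHeartbeats 1000000


open Matrix

/-- `P` is the Moore–Penrose pseudoinverse of `A`. -/
def IsMoorePenrose {m n : ℕ} (A : Matrix (Fin m) (Fin n) ℝ)
    (P : Matrix (Fin n) (Fin m) ℝ) : Prop :=
  A * P * A = A ∧ P * A * P = P ∧ (A * P)ᵀ = A * P ∧ (P * A)ᵀ = P * A

section Aux

/-- Uniqueness of the Moore–Penrose pseudoinverse. -/
lemma mp_unique {m n : ℕ} {A : Matrix (Fin m) (Fin n) ℝ} {P₁ P₂ : Matrix (Fin n) (Fin m) ℝ}
    (h₁ : IsMoorePenrose A P₁) (h₂ : IsMoorePenrose A P₂) : P₁ = P₂ := by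
  obtain ⟨a1, b1, c1, d1⟩ := h₁
  obtain ⟨a2, b2, c2, d2⟩ := h₂
  have hAP : A * P₁ = A * P₂ := by
    calc A * P₁ = (A * P₂ * A) * P₁ := by rw [a2]
      _ = (A * P₂) * (A * P₁) := by rw [Matrix.mul_assoc]
      _ = (A * P₂)ᵀ * (A * P₁)ᵀ := by rw [c1, c2]
      _ = ((A * P₁) * (A * P₂))ᵀ := (Matrix.transpose_mul _ _).symm
      _ = ((A * P₁ * A) * P₂)ᵀ := by simp only [Matrix.mul_assoc]
      _ = (A * P₂)ᵀ := by rw [a1]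
      _ = A * P₂ := c2
  have hPA : P₁ * A = P₂ * A := by
    calc P₁ * A = P₁ * (A * P₂ * A) := by rw [a2]
      _ = (P₁ * A) * (P₂ * A) := by simp only [Matrix.mul_assoc]
      _ = (P₁ * A)ᵀ * (P₂ * A)ᵀ := by rw [d1, d2]
      _ = ((P₂ * A) * (P₁ * A))ᵀ := (Matrix.transpose_mul _ _).symm
      _ = (P₂ * (A * P₁ * A))ᵀ := by simp only [Matrix.mul_assoc]
      _ = (P₂ * A)ᵀ := by rw [a1]
      _ = P₂ * A := d2
  calc P₁ = P₁ * A * P₁ := b1.symm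
    _ = P₂ * A * P₁ := by rw [hPA]
    _ = P₂ * (A * P₁) := by rw [Matrix.mul_assoc]
    _ = P₂ * (A * P₂) := by rw [hAP]
    _ = P₂ := by rw [← Matrix.mul_assoc, b2]

lemma mp_transpose {m n : ℕ} {A : Matrix (Fin m) (Fin n) ℝ} {P : Matrix (Fin n) (Fin m) ℝ}
    (h : IsMoorePenrose A P) : IsMoorePenrose Aᵀ Pᵀ := by
  obtain ⟨a, b, c, d⟩ := h
  refine ⟨?_, ?_, ?_, ?_⟩
  · have : Aᵀ * Pᵀ * Aᵀ = (A * P * A)ᵀ := by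
      simp only [Matrix.transpose_mul, Matrix.mul_assoc]
    rw [this, a]
  · have : Pᵀ * Aᵀ * Pᵀ = (P * A * P)ᵀ := by
      simp only [Matrix.transpose_mul, Matrix.mul_assoc]
    rw [this, b]
  · have h1 : Aᵀ * Pᵀ = (P * A)ᵀ := (Matrix.transpose_mul _ _).symm
    rw [h1, Matrix.transpose_transpose, d]
  · have h1 : Pᵀ * Aᵀ = (A * P)ᵀ := (Matrix.transpose_mul _ _).symm
    rw [h1, Matrix.transpose_transpose, c]

lemma mp_symm {k : ℕ} {M P : Matrix (Fin k) (Fin k) ℝ} (hM : Mᵀ = M)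
    (hP : IsMoorePenrose M P) : Pᵀ = P := by
  have h := mp_transpose hP
  rw [hM] at h
  exact mp_unique h hP

/-- If `Q` is a Moore–Penrose inverse of `A * Aᵀ`, then `A * Aᵀ * Q * A = A`. -/
lemma mp_proj {m n : ℕ} (A : Matrix (Fin m) (Fin n) ℝ) (Q : Matrix (Fin m) (Fin m) ℝ)
    (hQ : IsMoorePenrose (A * Aᵀ) Q) : A * Aᵀ * Q * A = A := by
  have h1 : A * (Aᵀ * (Q * (A * Aᵀ))) = A * Aᵀ := by
    simpa only [Matrix.mul_assoc] using hQ.1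
  have h1R : ∀ (Z : Matrix (Fin m) (Fin m) ℝ),
      A * (Aᵀ * (Q * (A * (Aᵀ * Z)))) = A * (Aᵀ * Z) := by
    intro Z
    simpa only [Matrix.mul_assoc] using congrArg (· * Z) hQ.1
  set B := A * Aᵀ * Q * A with hB
  have hBt : Bᵀ = Aᵀ * (Qᵀ * (A * Aᵀ)) := by
    rw [hB]
    simp [Matrix.transpose_mul, Matrix.mul_assoc]
  have key : (A - B) * (A - B)ᵀ = 0 := by
    rw [Matrix.transpose_sub, Matrix.mul_sub, Matrix.sub_mul, Matrix.sub_mul, hBt]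
    simp only [hB, Matrix.mul_assoc, h1R, h1]
    simp
  have h2 : A - B = 0 := by
    have := Matrix.self_mul_conjTranspose_eq_zero (A := A - B)
    rw [Matrix.conjTranspose_eq_transpose_of_trivial] at this
    exact this.mp key
  have := sub_eq_zero.mp h2
  exact this.symm

/-- If `P` is a Moore–Penrose inverse of `Aᵀ * A`, then `P * Aᵀ` is one of `A`. -/
lemma mp_left {m n : ℕ} (A : Matrix (Fin m) (Fin n) ℝ) (P : Matrix (Fin n) (Fin n) ℝ)
    (hP : IsMoorePenrose (Aᵀ * A) P) : IsMoorePenrose A (P * Aᵀ) := by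
  have hPsym : Pᵀ = P := mp_symm (by simp [Matrix.transpose_mul]) hP
  have claim1 : Aᵀ * A * P * Aᵀ = Aᵀ := by
    have := mp_proj Aᵀ P (by rwa [Matrix.transpose_transpose])
    rwa [Matrix.transpose_transpose] at this
  refine ⟨?_, ?_, ?_, ?_⟩
  · -- A * (P * Aᵀ) * A = A
    have := congrArg Matrix.transpose claim1
    simp only [Matrix.transpose_mul, Matrix.transpose_transpose, hPsym] at this
    simpa only [Matrix.mul_assoc] using this
  · -- (P * Aᵀ) * A * (P * Aᵀ) = P * Aᵀ
    have := congrArg (· * Aᵀ) hP.2.1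
    simpa only [Matrix.mul_assoc] using this
  · -- symmetry of A * (P * Aᵀ)
    simp only [Matrix.transpose_mul, Matrix.transpose_transpose, hPsym, Matrix.mul_assoc]
  · -- symmetry of (P * Aᵀ) * A
    have := hP.2.2.2
    simp only [Matrix.mul_assoc] at this ⊢
    exact this

/-- If `Q` is a Moore–Penrose inverse of `A * Aᵀ`, then `Aᵀ * Q` is one of `A`. -/
lemma mp_right {m n : ℕ} (A : Matrix (Fin m) (Fin n) ℝ) (Q : Matrix (Fin m) (Fin m) ℝ)
    (hQ : IsMoorePenrose (A * Aᵀ) Q) : IsMoorePenrose A (Aᵀ * Q) := by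
  have hQsym : Qᵀ = Q := mp_symm (by simp [Matrix.transpose_mul]) hQ
  refine ⟨?_, ?_, ?_, ?_⟩
  · simpa only [Matrix.mul_assoc] using mp_proj A Q hQ
  · have := congrArg (Aᵀ * ·) hQ.2.1
    simpa only [Matrix.mul_assoc] using this
  · have := hQ.2.2.1
    simp only [Matrix.mul_assoc] at this ⊢
    exact this
  · simp only [Matrix.transpose_mul, Matrix.transpose_transpose, hQsym, Matrix.mul_assoc]

end Aux

/-- for `Γ` symmetric positive definite with inverse square root `R`
(`R` positive definite, `R * R = Γ⁻¹`),
`lim_{λ₀→0⁺} (XᵀX + λ₀Γ)⁻¹ Xᵀ y = Γ^{-1/2}(Γ^{-1/2}XᵀXΓ^{-1/2})⁺Γ^{-1/2}Xᵀ y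
= Γ⁻¹Xᵀ(XΓ⁻¹Xᵀ)⁺ y` for every `y`, where `(·)⁺` is the Moore–Penrose pseudoinverse. -/
theorem stmt18 (n p : ℕ) (X : Matrix (Fin n) (Fin p) ℝ) (Γ R : Matrix (Fin p) (Fin p) ℝ)
    (hΓ : Γ.PosDef) (hR : R.PosDef) (hRsq : R * R = Γ⁻¹)
    (P : Matrix (Fin p) (Fin p) ℝ) (hP : IsMoorePenrose (R * Xᵀ * X * R) P)
    (Q : Matrix (Fin n) (Fin n) ℝ) (hQ : IsMoorePenrose (X * Γ⁻¹ * Xᵀ) Q)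
    (y : Fin n → ℝ) :
    Filter.Tendsto (fun lam : ℝ => (Xᵀ * X + lam • Γ)⁻¹ *ᵥ (Xᵀ *ᵥ y))
        (nhdsWithin 0 (Set.Ioi 0)) (nhds (R *ᵥ (P *ᵥ (R *ᵥ (Xᵀ *ᵥ y))))) ∧
      R *ᵥ (P *ᵥ (R *ᵥ (Xᵀ *ᵥ y))) = Γ⁻¹ *ᵥ (Xᵀ *ᵥ (Q *ᵥ y)) := by
  classical
  have hRdet : IsUnit R.det := isUnit_iff_ne_zero.mpr hR.det_pos.ne'
  have hΓdet : IsUnit Γ.det := isUnit_iff_ne_zero.mpr hΓ.det_pos.ne'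
  have hRT : Rᵀ = R := by
    rw [← Matrix.conjTranspose_eq_transpose_of_trivial R]
    exact hR.isHermitian.eq
  set A : Matrix (Fin n) (Fin p) ℝ := X * R with hA
  have hAT : Aᵀ = R * Xᵀ := by rw [hA, Matrix.transpose_mul, hRT]
  set M : Matrix (Fin p) (Fin p) ℝ := R * Xᵀ * X * R with hM
  have hMA : M = Aᵀ * A := by rw [hAT, hA, hM]; simp only [Matrix.mul_assoc]
  have hMsym : Mᵀ = M := by
    rw [hMA]; simp only [Matrix.transpose_mul, Matrix.transpose_transpose]
  have hMpsd : M.PosSemidef := by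
    rw [hMA, ← Matrix.conjTranspose_eq_transpose_of_trivial]
    exact Matrix.posSemidef_conjTranspose_mul_self A
  have hΓinv : Γ⁻¹ = R * R := hRsq.symm
  have hG : X * Γ⁻¹ * Xᵀ = A * Aᵀ := by
    rw [hΓinv, hAT, hA]; simp only [Matrix.mul_assoc]
  rw [hG] at hQ
  have hPsym : Pᵀ = P := mp_symm hMsym hP
  -- the second equality
  have hkey : P * Aᵀ = Aᵀ * Q :=
    mp_unique (mp_left A P (by rw [← hMA]; exact hP)) (mp_right A Q hQ)
  have hmat : R * (P * (R * Xᵀ)) = Γ⁻¹ * (Xᵀ * Q) := by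
    rw [← hAT, hkey, hAT, hΓinv]
    simp only [Matrix.mul_assoc]
  have part2 : R *ᵥ (P *ᵥ (R *ᵥ (Xᵀ *ᵥ y))) = Γ⁻¹ *ᵥ (Xᵀ *ᵥ (Q *ᵥ y)) := by
    simp only [Matrix.mulVec_mulVec]
    rw [hmat]
  refine ⟨?_, part2⟩
  -- the limit
  set v : Fin p → ℝ := R *ᵥ (Xᵀ *ᵥ y) with hv
  set u : Fin p → ℝ := P *ᵥ v with hu
  set r : Fin p → ℝ := P *ᵥ u with hr
  have hvA : v = Aᵀ *ᵥ y := by rw [hv, hAT, ← Matrix.mulVec_mulVec]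
  -- M *ᵥ u = v
  have claim1 : M * P * Aᵀ = Aᵀ := by
    have := mp_proj Aᵀ P (by rwa [Matrix.transpose_transpose, ← hMA])
    rwa [Matrix.transpose_transpose, ← hMA] at this
  have hMu : M *ᵥ u = v := by
    rw [hu, hvA, Matrix.mulVec_mulVec, Matrix.mulVec_mulVec, claim1]
  -- M *ᵥ r = u
  have hPM : M * P = P * M := by
    have h4 := hP.2.2.2
    rw [Matrix.transpose_mul, hMsym, hPsym] at h4
    exact h4
  have hMPP : M * P * P = P := by
    rw [hPM, Matrix.mul_assoc, ← Matrix.mul_assoc, hP.2.1]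
  have hMr : M *ᵥ r = u := by
    rw [hr, hu, Matrix.mulVec_mulVec, Matrix.mulVec_mulVec, hMPP]
  -- positive definiteness of M + lam • 1
  have hNpd : ∀ lam : ℝ, 0 < lam → (M + lam • 1).PosDef := by
    intro lam hlam
    refine Matrix.PosDef.posSemidef_add hMpsd (Matrix.posDef_iff_dotProduct_mulVec.mpr ⟨?_, ?_⟩)
    · show (lam • (1 : Matrix (Fin p) (Fin p) ℝ))ᴴ = lam • 1
      simp
    · intro x hx
      have hxx : 0 < x ⬝ᵥ x := by
        simpa using Matrix.dotProduct_star_self_pos_iff (v := x) |>.mpr hx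
      simpa [Matrix.smul_mulVec, Matrix.one_mulVec, smul_eq_mul] using
        mul_pos hlam hxx
  have hNdet : ∀ lam : ℝ, 0 < lam → IsUnit (M + lam • 1).det := fun lam hlam =>
    isUnit_iff_ne_zero.mpr (hNpd lam hlam).det_pos.ne'
  -- the inverse identity
  have hΓRR : R⁻¹ * R⁻¹ = Γ := by
    rw [← Matrix.mul_inv_rev, hRsq, Matrix.nonsing_inv_nonsing_inv _ hΓdet]
  have hXtX : R⁻¹ * M * R⁻¹ = Xᵀ * X := by
    rw [hM]
    have h : R⁻¹ * (R * Xᵀ * X * R) * R⁻¹ = R⁻¹ * R * (Xᵀ * X) * (R * R⁻¹) := by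
      simp only [Matrix.mul_assoc]
    rw [h, Matrix.mul_nonsing_inv _ hRdet, Matrix.mul_one,
      Matrix.nonsing_inv_mul _ hRdet, Matrix.one_mul]
  have hsplit : ∀ lam : ℝ, Xᵀ * X + lam • Γ = R⁻¹ * (M + lam • 1) * R⁻¹ := by
    intro lam
    rw [Matrix.mul_add, Matrix.add_mul, hXtX, Matrix.mul_smul, Matrix.mul_one,
      Matrix.smul_mul, hΓRR]
  have hinv : ∀ lam : ℝ, 0 < lam →
      (Xᵀ * X + lam • Γ)⁻¹ = R * (M + lam • 1)⁻¹ * R := by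
    intro lam hlam
    rw [hsplit lam, Matrix.mul_inv_rev, Matrix.mul_inv_rev,
      Matrix.nonsing_inv_nonsing_inv _ hRdet, Matrix.mul_assoc]
  -- exact formula for the regularized solution
  have hNvinv : ∀ lam : ℝ, 0 < lam → ∀ w : Fin p → ℝ,
      (M + lam • 1) *ᵥ ((M + lam • 1)⁻¹ *ᵥ w) = w := by
    intro lam hlam w
    rw [Matrix.mulVec_mulVec, Matrix.mul_nonsing_inv _ (hNdet lam hlam), Matrix.one_mulVec]
  have hform : ∀ lam : ℝ, 0 < lam →
      (M + lam • 1)⁻¹ *ᵥ v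
        = u - lam • r + (lam ^ 2) • ((M + lam • 1)⁻¹ *ᵥ r) := by
    intro lam hlam
    have hinj : Function.Injective fun x : Fin p → ℝ => (M + lam • 1) *ᵥ x :=
      Matrix.mulVec_injective_iff_isUnit.mpr (hNpd lam hlam).isUnit
    apply hinj
    show (M + lam • 1) *ᵥ _ = (M + lam • 1) *ᵥ _
    rw [hNvinv lam hlam v]
    rw [Matrix.mulVec_add, Matrix.mulVec_sub, Matrix.mulVec_smul, Matrix.mulVec_smul,
      hNvinv lam hlam r]
    rw [Matrix.add_mulVec, Matrix.add_mulVec, Matrix.smul_mulVec,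
      Matrix.smul_mulVec, Matrix.one_mulVec, Matrix.one_mulVec, hMu, hMr]
    module
  -- the error bound
  have hbound : ∀ lam : ℝ, 0 < lam → ∀ i : Fin p,
      |lam ^ 2 * (((M + lam • 1)⁻¹ *ᵥ r) i)| ≤ lam * Real.sqrt (r ⬝ᵥ r) := by
    intro lam hlam i
    set g : Fin p → ℝ := (M + lam • 1)⁻¹ *ᵥ r with hg
    have hNg : (M + lam • 1) *ᵥ g = r := hNvinv lam hlam r
    have hquad : 0 ≤ g ⬝ᵥ (M *ᵥ g) := by simpa using hMpsd.dotProduct_mulVec_nonneg g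
    have hgr : lam * (g ⬝ᵥ g) ≤ g ⬝ᵥ r := by
      have expand : g ⬝ᵥ r = g ⬝ᵥ (M *ᵥ g) + lam * (g ⬝ᵥ g) := by
        rw [← hNg, Matrix.add_mulVec, Matrix.smul_mulVec, Matrix.one_mulVec,
          dotProduct_add, dotProduct_smul, smul_eq_mul]
      linarith
    have hCS : (g ⬝ᵥ r) * (g ⬝ᵥ r) ≤ (g ⬝ᵥ g) * (r ⬝ᵥ r) := by
      have := Finset.sum_mul_sq_le_sq_mul_sq Finset.univ g r
      simpa [dotProduct, pow_two] using this
    have hgg : 0 ≤ g ⬝ᵥ g := Finset.sum_nonneg fun j _ => mul_self_nonneg _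
    have hrr : 0 ≤ r ⬝ᵥ r := Finset.sum_nonneg fun j _ => mul_self_nonneg _
    have h3 : lam ^ 2 * (g ⬝ᵥ g) ≤ r ⬝ᵥ r := by
      rcases eq_or_lt_of_le hgg with h0 | h0
      · rw [← h0]; simpa using hrr
      · have hsq : (lam * (g ⬝ᵥ g)) * (lam * (g ⬝ᵥ g)) ≤ (g ⬝ᵥ g) * (r ⬝ᵥ r) :=
          le_trans (mul_self_le_mul_self (mul_nonneg hlam.le hgg) hgr) hCS
        have h6 : (lam ^ 2 * (g ⬝ᵥ g)) * (g ⬝ᵥ g) ≤ (r ⬝ᵥ r) * (g ⬝ᵥ g) := by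
          have hring : (lam * (g ⬝ᵥ g)) * (lam * (g ⬝ᵥ g))
              = (lam ^ 2 * (g ⬝ᵥ g)) * (g ⬝ᵥ g) := by ring
          have hring2 : (g ⬝ᵥ g) * (r ⬝ᵥ r) = (r ⬝ᵥ r) * (g ⬝ᵥ g) := by ring
          rw [hring, hring2] at hsq
          exact hsq
        exact le_of_mul_le_mul_right h6 h0
    have h4 : g i * g i ≤ g ⬝ᵥ g := by
      have := Finset.single_le_sum (f := fun j => g j * g j)
        (fun j _ => mul_self_nonneg _) (Finset.mem_univ i)
      simpa [dotProduct] using this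
    have h5 : (lam ^ 2 * g i) ^ 2 ≤ lam ^ 2 * (r ⬝ᵥ r) := by
      have e1 : lam ^ 4 * (g i * g i) ≤ lam ^ 4 * (g ⬝ᵥ g) :=
        mul_le_mul_of_nonneg_left h4 (by positivity)
      have e2 : lam ^ 2 * (lam ^ 2 * (g ⬝ᵥ g)) ≤ lam ^ 2 * (r ⬝ᵥ r) :=
        mul_le_mul_of_nonneg_left h3 (sq_nonneg lam)
      calc (lam ^ 2 * g i) ^ 2 = lam ^ 4 * (g i * g i) := by ring
        _ ≤ lam ^ 4 * (g ⬝ᵥ g) := e1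
        _ = lam ^ 2 * (lam ^ 2 * (g ⬝ᵥ g)) := by ring
        _ ≤ lam ^ 2 * (r ⬝ᵥ r) := e2
    calc |lam ^ 2 * g i| = Real.sqrt ((lam ^ 2 * g i) ^ 2) := (Real.sqrt_sq_eq_abs _).symm
      _ ≤ Real.sqrt (lam ^ 2 * (r ⬝ᵥ r)) := Real.sqrt_le_sqrt h5
      _ = lam * Real.sqrt (r ⬝ᵥ r) := by
          rw [Real.sqrt_mul (sq_nonneg lam), Real.sqrt_sq hlam.le]
  -- the vanishing correction term
  have tendsto0 : Filter.Tendsto (fun lam : ℝ => (lam ^ 2) • ((M + lam • 1)⁻¹ *ᵥ r))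
      (nhdsWithin 0 (Set.Ioi 0)) (nhds 0) := by
    rw [tendsto_pi_nhds]
    intro i
    have hupper : Filter.Tendsto (fun lam : ℝ => lam * Real.sqrt (r ⬝ᵥ r))
        (nhdsWithin 0 (Set.Ioi 0)) (nhds 0) := by
      have : Filter.Tendsto (fun lam : ℝ => lam * Real.sqrt (r ⬝ᵥ r)) (nhds 0)
          (nhds (0 * Real.sqrt (r ⬝ᵥ r))) :=
        (continuous_id.mul continuous_const).tendsto 0
      rw [zero_mul] at this
      exact this.mono_left nhdsWithin_le_nhds
    have hlower : Filter.Tendsto (fun lam : ℝ => -(lam * Real.sqrt (r ⬝ᵥ r)))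
        (nhdsWithin 0 (Set.Ioi 0)) (nhds 0) := by
      simpa using hupper.neg
    refine tendsto_of_tendsto_of_tendsto_of_le_of_le' hlower hupper ?_ ?_
    · filter_upwards [self_mem_nhdsWithin] with lam hlam
      have := (abs_le.mp (hbound lam hlam i)).1
      simpa [Pi.smul_apply, smul_eq_mul] using this
    · filter_upwards [self_mem_nhdsWithin] with lam hlam
      have := (abs_le.mp (hbound lam hlam i)).2
      simpa [Pi.smul_apply, smul_eq_mul] using this
  -- the main limit
  have htend_inner : Filter.Tendsto
      (fun lam : ℝ => u - lam • r + (lam ^ 2) • ((M + lam • 1)⁻¹ *ᵥ r))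
      (nhdsWithin 0 (Set.Ioi 0)) (nhds u) := by
    have h1 : Filter.Tendsto (fun lam : ℝ => u - lam • r)
        (nhdsWithin 0 (Set.Ioi 0)) (nhds u) := by
      have : Filter.Tendsto (fun lam : ℝ => u - lam • r) (nhds 0)
          (nhds (u - (0 : ℝ) • r)) :=
        (continuous_const.sub (continuous_id.smul continuous_const)).tendsto 0
      rw [zero_smul, sub_zero] at this
      exact this.mono_left nhdsWithin_le_nhds
    simpa using h1.add tendsto0
  have hRcont : Continuous fun x : Fin p → ℝ => R *ᵥ x := by
    have := (Matrix.mulVecLin R).continuous_of_finiteDimensional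
    exact this
  have hfinal : Filter.Tendsto
      (fun lam : ℝ => R *ᵥ (u - lam • r + (lam ^ 2) • ((M + lam • 1)⁻¹ *ᵥ r)))
      (nhdsWithin 0 (Set.Ioi 0)) (nhds (R *ᵥ u)) :=
    (hRcont.tendsto u).comp htend_inner
  refine Filter.Tendsto.congr' ?_ hfinal
  filter_upwards [self_mem_nhdsWithin] with lam hlam
  have hlam' : (0:ℝ) < lam := hlam
  rw [← hform lam hlam']
  rw [hinv lam hlam']
  rw [← Matrix.mulVec_mulVec, ← Matrix.mulVec_mulVec]
end
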